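/- Suppose Γ is ω-clique regular and a non-boring strongly regular graph srg(n,k,λ,μ). Then Γ and C_ω(Γ) are strongly regular graphs with the same parameters if and only if k = ω(ω−1). -/

import Mathlib

open SimpleGraph Finset Matrix

/-- A graph is `ω`-clique regular if its edge set is nonempty and every edge lies in a
unique clique of order `ω`. -/
def IsCliqueRegular {V : Type*} (G : SimpleGraph V) (ω : ℕ) : Prop :=
  G.edgeSet.Nonempty ∧
    ∀ ⦃x y : V⦄, G.Adj x y → ∃! s : Finset V, G.IsNClique ω s ∧ x ∈ s ∧ y ∈ s

/-- The `ω`-clique graph: vertices are the `ω`-cliques of `G`, two distinct cliques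
adjacent iff they have nonempty intersection. -/
def cliqueGraph {V : Type*} [DecidableEq V] (G : SimpleGraph V) (ω : ℕ) :
    SimpleGraph {s : Finset V // G.IsNClique ω s} where
  Adj a b := a ≠ b ∧ (a.val ∩ b.val).Nonempty
  symm := ⟨fun a b => by
    rintro ⟨h1, h2⟩
    exact ⟨h1.symm, by rwa [Finset.inter_comm]⟩⟩
  loopless := ⟨fun a => by simp⟩

instance {V : Type*} [DecidableEq V] (G : SimpleGraph V) (ω : ℕ) :
    DecidableRel (cliqueGraph G ω).Adj :=
  fun a b => inferInstanceAs (Decidable (a ≠ b ∧ (a.val ∩ b.val).Nonempty))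

section Aux
variable {V : Type*} [Fintype V] [DecidableEq V] {G : SimpleGraph V} [DecidableRel G.Adj] {ω : ℕ}

lemma line_unique (hcr : IsCliqueRegular G ω) {x y : V} (hxy : G.Adj x y) {s t : Finset V}
    (hs : G.IsNClique ω s) (hxs : x ∈ s) (hys : y ∈ s)
    (ht : G.IsNClique ω t) (hxt : x ∈ t) (hyt : y ∈ t) : s = t := by
  obtain ⟨c, -, hu⟩ := hcr.2 hxy
  rw [hu s ⟨hs, hxs, hys⟩, hu t ⟨ht, hxt, hyt⟩]

lemma exists_adj (hcr : IsCliqueRegular G ω) : ∃ x y : V, G.Adj x y := by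
  obtain ⟨e, he⟩ := hcr.1
  induction e using Sym2.ind with
  | _ x y => exact ⟨x, y, he⟩

lemma omega_ge_two (hcr : IsCliqueRegular G ω) : 2 ≤ ω := by
  obtain ⟨x, y, hxy⟩ := exists_adj hcr
  obtain ⟨s, ⟨hs, hxs, hys⟩, -⟩ := hcr.2 hxy
  have : 1 < s.card := Finset.one_lt_card.2 ⟨x, hxs, y, hys, hxy.ne⟩
  rw [hs.card_eq] at this
  exact this

/-- number of lines through `x` times `ω - 1` equals the degree of `x`. -/
lemma lines_through (hcr : IsCliqueRegular G ω) (x : V) :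
    (univ.filter fun s : {s : Finset V // G.IsNClique ω s} => x ∈ s.1).card * (ω - 1)
      = G.degree x := by
  classical
  set Lt := {s : Finset V // G.IsNClique ω s}
  set P : Finset ((_ : Lt) × V) :=
    (univ.filter fun s : Lt => x ∈ s.1).sigma fun s => s.1.erase x with hP
  have hPcard : P.card = (univ.filter fun s : Lt => x ∈ s.1).card * (ω - 1) := by
    rw [hP, Finset.card_sigma]
    rw [Finset.sum_congr rfl fun s hs => ?_, Finset.sum_const, smul_eq_mul]
    rw [Finset.card_erase_of_mem (Finset.mem_filter.1 hs).2, s.2.card_eq]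
  have hbij : P.card = (G.neighborFinset x).card := by
    apply Finset.card_bij (fun (p : (_ : Lt) × V) _ => p.2)
    · rintro ⟨s, y⟩ hp
      obtain ⟨hs, hy⟩ := Finset.mem_sigma.1 hp
      rw [Finset.mem_filter] at hs
      rw [SimpleGraph.mem_neighborFinset]
      obtain ⟨hyne, hys⟩ := Finset.mem_erase.1 hy
      exact s.2.1 hs.2 hys (Ne.symm hyne)
    · rintro ⟨s, y⟩ hp ⟨t, z⟩ hq h
      dsimp at h
      subst h
      obtain ⟨hs, hy⟩ := Finset.mem_sigma.1 hp
      obtain ⟨ht, hz⟩ := Finset.mem_sigma.1 hq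
      rw [Finset.mem_filter] at hs ht
      obtain ⟨hyne, hys⟩ := Finset.mem_erase.1 hy
      obtain ⟨hzne, hzs⟩ := Finset.mem_erase.1 hz
      have hadj : G.Adj x y := s.2.1 hs.2 hys (Ne.symm hyne)
      have : s.1 = t.1 := line_unique hcr hadj s.2 hs.2 hys t.2 ht.2 hzs
      simp [Subtype.ext this]
    · intro y hy
      rw [SimpleGraph.mem_neighborFinset] at hy
      obtain ⟨c, ⟨hc, hxc, hyc⟩, -⟩ := hcr.2 hy
      refine ⟨⟨⟨c, hc⟩, y⟩, ?_, rfl⟩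
      rw [hP, Finset.mem_sigma, Finset.mem_filter, Finset.mem_erase]
      exact ⟨⟨Finset.mem_univ _, hxc⟩, hy.ne', hyc⟩
  rw [← hPcard, hbij, SimpleGraph.card_neighborFinset_eq_degree]

lemma inter_card_le_one (hcr : IsCliqueRegular G ω) {s t : {s : Finset V // G.IsNClique ω s}}
    (hst : s ≠ t) : (s.1 ∩ t.1).card ≤ 1 := by
  by_contra h
  push_neg at h
  obtain ⟨a, ha, b, hb, hab⟩ := Finset.one_lt_card.1 h
  rw [Finset.mem_inter] at ha hb
  have hadj : G.Adj a b := s.2.1 ha.1 hb.1 hab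
  exact hst (Subtype.ext (line_unique hcr hadj s.2 ha.1 hb.1 t.2 ha.2 hb.2))

lemma incidence_sum :
    ∑ x : V, (univ.filter fun s : {s : Finset V // G.IsNClique ω s} => x ∈ s.1).card
      = ∑ s : {s : Finset V // G.IsNClique ω s}, s.1.card := by
  simp only [Finset.card_filter]
  rw [Finset.sum_comm]
  congr 1
  ext s
  simp [Finset.sum_ite_mem]

end Aux

/-- For an `ω`-clique regular, non-boring `srg(n,k,λ,μ)`, the graph `Γ` and its clique
graph `C_ω(Γ)` are strongly regular with the same parameters iff `k = ω(ω−1)`. -/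
theorem stmt16 {V : Type*} [Fintype V] [DecidableEq V] (G : SimpleGraph V)
    [DecidableRel G.Adj] (ω n k l μ : ℕ)
    (hcr : IsCliqueRegular G ω)
    (hsrg : G.IsSRGWith n k l μ)
    (hnonboring : ∃ r s : ℝ,
      spectrum ℝ (G.adjMatrix ℝ) = {(k : ℝ), r, s} ∧ r < (k : ℝ) ∧ s < r) :
    (cliqueGraph G ω).IsSRGWith n k l μ ↔ k = ω * (ω - 1) := by
  clear hnonboring
  have hω2 : 2 ≤ ω := omega_ge_two hcr
  have hn0 : 0 < n := by
    obtain ⟨x, -, -⟩ := exists_adj hcr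
    rw [← hsrg.card]
    exact Fintype.card_pos_iff.2 ⟨x⟩
  constructor
  · -- forward: count
    intro hC
    have hsum : ∑ x : V, (univ.filter
        fun s : {s : Finset V // G.IsNClique ω s} => x ∈ s.1).card * (ω - 1) = n * k := by
      rw [Finset.sum_congr rfl fun x _ => (lines_through hcr x).trans (hsrg.regular x),
        Finset.sum_const, smul_eq_mul, Finset.card_univ, hsrg.card]
    rw [← Finset.sum_mul, incidence_sum] at hsum
    have hcards : ∑ s : {s : Finset V // G.IsNClique ω s}, s.1.card = n * ω := by
      rw [Finset.sum_congr rfl fun s _ => s.2.card_eq, Finset.sum_const, smul_eq_mul, Finset.card_univ, hC.card]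
    rw [hcards] at hsum
    have : n * (ω * (ω - 1)) = n * k := by rw [← hsum]; ring
    exact (Nat.eq_of_mul_eq_mul_left hn0 this).symm
  · -- backward
    intro hk
    classical
    set N : Matrix V {s : Finset V // G.IsNClique ω s} ℝ :=
      Matrix.of fun x s => if x ∈ s.1 then 1 else 0 with hN
    set A : Matrix V V ℝ := G.adjMatrix ℝ with hA
    set Ac : Matrix {s : Finset V // G.IsNClique ω s} {s : Finset V // G.IsNClique ω s} ℝ :=
      (cliqueGraph G ω).adjMatrix ℝ with hAc
    set Jv : Matrix V V ℝ := Matrix.of fun _ _ => 1 with hJv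
    set Jl : Matrix {s : Finset V // G.IsNClique ω s} {s : Finset V // G.IsNClique ω s} ℝ :=
      Matrix.of fun _ _ => 1 with hJl
    have hLx : ∀ x : V, (univ.filter
        fun s : {s : Finset V // G.IsNClique ω s} => x ∈ s.1).card = ω := by
      intro x
      have h1 := lines_through hcr x
      rw [hsrg.regular x, hk] at h1
      exact Nat.eq_of_mul_eq_mul_right (by omega) h1
    have hNNt : N * Nᵀ = A + (ω : ℝ) • 1 := by
      ext x y
      have hLHS : (N * Nᵀ) x y = ((univ.filter
          fun s : {s : Finset V // G.IsNClique ω s} => x ∈ s.1 ∧ y ∈ s.1).card : ℝ) := by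
        rw [Finset.card_filter]
        push_cast
        simp only [Matrix.mul_apply, Matrix.transpose_apply, Matrix.of_apply, hN]
        refine Finset.sum_congr rfl fun s _ => ?_
        split_ifs <;> simp_all
      rw [hLHS]
      by_cases hxy : x = y
      · subst hxy
        have he : (univ.filter fun s : {s : Finset V // G.IsNClique ω s} => x ∈ s.1 ∧ x ∈ s.1)
            = univ.filter fun s : {s : Finset V // G.IsNClique ω s} => x ∈ s.1 := by
          simp
        rw [he, hLx x]
        simp [hA, Matrix.one_apply]
      · by_cases hadj : G.Adj x y
        · obtain ⟨c, hc, hu⟩ := hcr.2 hadj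
          have he : (univ.filter fun s : {s : Finset V // G.IsNClique ω s} => x ∈ s.1 ∧ y ∈ s.1)
              = {⟨c, hc.1⟩} := by
            ext t
            simp only [Finset.mem_filter, Finset.mem_univ, true_and, Finset.mem_singleton]
            constructor
            · rintro ⟨hxt, hyt⟩
              exact Subtype.ext (hu t.1 ⟨t.2, hxt, hyt⟩)
            · rintro rfl
              exact ⟨hc.2.1, hc.2.2⟩
          rw [he]
          simp [hA, hadj, Matrix.one_apply_ne hxy]
        · have he : (univ.filter fun s : {s : Finset V // G.IsNClique ω s} => x ∈ s.1 ∧ y ∈ s.1)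
              = ∅ := by
            ext t
            simp only [Finset.mem_filter, Finset.mem_univ, true_and, Finset.notMem_empty,
              iff_false, not_and]
            intro hxt hyt
            exact hadj (t.2.1 hxt hyt hxy)
          rw [he]
          simp [hA, hadj, Matrix.one_apply_ne hxy]
    have hNtN : Nᵀ * N = Ac + (ω : ℝ) • 1 := by
      ext s t
      have hLHS : (Nᵀ * N) s t = ((s.1 ∩ t.1).card : ℝ) := by
        have he : s.1 ∩ t.1 = univ.filter fun x : V => x ∈ s.1 ∧ x ∈ t.1 := by
          ext x; simp [Finset.mem_inter]
        rw [he, Finset.card_filter]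
        push_cast
        simp only [Matrix.mul_apply, Matrix.transpose_apply, Matrix.of_apply, hN]
        refine Finset.sum_congr rfl fun x _ => ?_
        split_ifs <;> simp_all
      rw [hLHS]
      by_cases hst : s = t
      · subst hst
        rw [Finset.inter_self, s.2.card_eq]
        simp [hAc, Matrix.one_apply]
      · by_cases hne : (s.1 ∩ t.1).Nonempty
        · have h1 : (s.1 ∩ t.1).card = 1 :=
            Nat.le_antisymm (inter_card_le_one hcr hst) (Finset.card_pos.2 hne)
          rw [h1]
          have hadj : (cliqueGraph G ω).Adj s t := ⟨hst, hne⟩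
          simp [hAc, adjMatrix_apply, hadj, Matrix.one_apply_ne hst]
        · rw [Finset.not_nonempty_iff_eq_empty] at hne
          rw [hne]
          have hnadj : ¬ (cliqueGraph G ω).Adj s t := by
            rintro ⟨-, hne2⟩
            simp [hne] at hne2
          simp [hAc, adjMatrix_apply, hnadj, Matrix.one_apply_ne hst]
    have hrowN : ∀ x : V, ∑ s : {s : Finset V // G.IsNClique ω s}, N x s = (ω : ℝ) := by
      intro x
      have : ∑ s : {s : Finset V // G.IsNClique ω s}, N x s
          = ((univ.filter fun s : {s : Finset V // G.IsNClique ω s} => x ∈ s.1).card : ℝ) := by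
        rw [Finset.card_filter]
        push_cast
        simp [hN]
      rw [this, hLx x]
    have hcolN : ∀ s : {s : Finset V // G.IsNClique ω s}, ∑ x : V, N x s = (ω : ℝ) := by
      intro s
      have : ∑ x : V, N x s = ((univ.filter fun x : V => x ∈ s.1).card : ℝ) := by
        rw [Finset.card_filter]
        push_cast
        simp [hN]
      rw [this, Finset.filter_univ_mem, s.2.card_eq]
    have hNtJvN : Nᵀ * (Jv * N) = ((ω : ℝ) ^ 2) • Jl := by
      have h1 : Jv * N = Matrix.of fun (_ : V) (_ : {s : Finset V // G.IsNClique ω s}) =>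
          (ω : ℝ) := by
        ext x t
        simp only [Matrix.mul_apply, hJv, Matrix.of_apply, one_mul]
        exact hcolN t
      rw [h1]
      ext s t
      simp only [Matrix.mul_apply, Matrix.transpose_apply, Matrix.of_apply, Matrix.smul_apply,
        hJl, smul_eq_mul, mul_one]
      rw [← Finset.sum_mul, hcolN s, sq]
    have hBJl : (Nᵀ * N) * Jl = ((ω : ℝ) ^ 2) • Jl := by
      ext s t
      simp only [Matrix.mul_apply, Matrix.transpose_apply, hJl, Matrix.of_apply, mul_one,
        Matrix.smul_apply, smul_eq_mul]
      rw [Finset.sum_comm]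
      rw [Finset.sum_congr rfl fun x _ => by rw [← Finset.mul_sum, hrowN x]]
      rw [← Finset.sum_mul, hcolN s, sq]
    have hJlsym : Jlᵀ = Jl := by
      ext s t; rfl
    have hBsym : (Nᵀ * N)ᵀ = Nᵀ * N := by
      rw [Matrix.transpose_mul, Matrix.transpose_transpose]
    have hJB : Jl * (Nᵀ * N) = ((ω : ℝ) ^ 2) • Jl := by
      have h := congrArg Matrix.transpose hBJl
      rw [Matrix.transpose_mul, hBsym, hJlsym, Matrix.transpose_smul, hJlsym] at h
      exact h
    have hωR : (ω : ℝ) ≠ 0 := Nat.cast_ne_zero.2 (by omega)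
    have hcard : Fintype.card {s : Finset V // G.IsNClique ω s} = n := by
      have h1 : (Nᵀ * N).trace = (N * Nᵀ).trace := Matrix.trace_mul_comm Nᵀ N
      rw [hNNt, hNtN] at h1
      simp only [Matrix.trace_add, Matrix.trace_smul, Matrix.trace_one, smul_eq_mul, hA, hAc,
        trace_adjMatrix, zero_add] at h1
      have h2 : (Fintype.card {s : Finset V // G.IsNClique ω s} : ℝ) = (Fintype.card V : ℝ) :=
        mul_left_cancel₀ hωR h1
      have h3 : Fintype.card {s : Finset V // G.IsNClique ω s} = Fintype.card V := by
        exact_mod_cast h2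
      rw [h3, hsrg.card]
    have hJJl : Jl * Jl = (n : ℝ) • Jl := by
      ext s t
      simp [hJl, Matrix.mul_apply, Finset.card_univ, hcard]
    have hJJv : Jv * Jv = (n : ℝ) • Jv := by
      ext x y
      simp [hJv, Matrix.mul_apply, Finset.card_univ, hsrg.card]
    have hAJ : A * Jv = (k : ℝ) • Jv := by
      ext x y
      simp only [hA, hJv, adjMatrix_mul_apply, Matrix.of_apply, Matrix.smul_apply,
        smul_eq_mul, mul_one]
      have h1 : ∑ u ∈ G.neighborFinset x, (1 : ℝ) = (G.degree x : ℝ) := by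
        rw [Finset.sum_const, SimpleGraph.card_neighborFinset_eq_degree, nsmul_eq_mul, mul_one]
      rw [h1, hsrg.regular x]
    have hcomplA : Gᶜ.adjMatrix ℝ = Jv - 1 - A := by
      ext x y
      simp only [Matrix.sub_apply, adjMatrix_apply, compl_adj, hJv, Matrix.of_apply,
        Matrix.one_apply, hA]
      by_cases h : x = y
      · subst h; simp
      · by_cases hadj : G.Adj x y <;> simp [h, hadj]
    have hA2 : A * A = (k : ℝ) • (1 : Matrix V V ℝ) + (l : ℝ) • A + (μ : ℝ) • (Jv - 1 - A) := by
      have h := hsrg.matrix_eq (α := ℝ)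
      rw [sq, hcomplA] at h
      rw [hA]
      simpa [← Nat.cast_smul_eq_nsmul ℝ] using h
    have hkey : (k : ℝ) ^ 2 = k + l * k + μ * ((n : ℝ) - 1 - k) := by
      obtain ⟨x0, -, -⟩ := exists_adj hcr
      have e1 : (A * A) * Jv = ((k : ℝ) ^ 2) • Jv := by
        rw [Matrix.mul_assoc, hAJ, mul_smul_comm, hAJ, smul_smul, sq]
      have e2 : (A * A) * Jv = ((k : ℝ) + l * k + μ * ((n : ℝ) - 1 - k)) • Jv := by
        rw [hA2]
        simp only [Matrix.add_mul, Matrix.sub_mul, smul_mul_assoc, Matrix.one_mul, hAJ, hJJv]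
        module
      have e3 := e1.symm.trans e2
      have h3 := congrFun (congrFun e3 x0) x0
      simpa [hJv, Matrix.smul_apply] using h3
    have hkR : (k : ℝ) = (ω : ℝ) ^ 2 - ω := by
      obtain ⟨w, rfl⟩ : ∃ w, ω = w + 2 := ⟨ω - 2, by omega⟩
      have : k = (w + 2) * (w + 1) := by rw [hk]; congr 1
      rw [this]
      push_cast
      ring
    set c1 : ℝ := 2 * ω + l - μ with hc1
    set c0 : ℝ := (ω : ℝ) ^ 2 + ω * (l - μ) - k + μ with hc0
    have alg1 : (N * Nᵀ) * (N * Nᵀ) = c1 • (N * Nᵀ) - c0 • 1 + (μ : ℝ) • Jv := by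
      rw [hNNt]
      simp only [Matrix.add_mul, Matrix.mul_add, smul_mul_assoc, mul_smul_comm,
        Matrix.one_mul, Matrix.mul_one, smul_smul]
      rw [hA2]
      match_scalars <;> simp only [hc1, hc0] <;> ring
    have alg2 : (Nᵀ * N) * ((Nᵀ * N) * (Nᵀ * N))
        = c1 • ((Nᵀ * N) * (Nᵀ * N)) - c0 • (Nᵀ * N) + ((μ : ℝ) * (ω : ℝ) ^ 2) • Jl := by
      have h := congrArg (fun M => Nᵀ * M * N) alg1
      simp only [Matrix.mul_add, Matrix.add_mul, Matrix.mul_sub, Matrix.sub_mul,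
        Matrix.smul_mul, Matrix.mul_smul, Matrix.mul_one, Matrix.one_mul,
        Matrix.mul_assoc] at h ⊢
      rw [hNtJvN] at h
      linear_combination (norm := module) h
    set B : Matrix {s : Finset V // G.IsNClique ω s} {s : Finset V // G.IsNClique ω s} ℝ
      := Nᵀ * N with hB
    set E : Matrix {s : Finset V // G.IsNClique ω s} {s : Finset V // G.IsNClique ω s} ℝ
      := B * B - c1 • B + c0 • 1 - (μ : ℝ) • Jl with hE
    have hBE : B * E = 0 := by
      rw [hE]
      simp only [Matrix.mul_sub, Matrix.mul_add, Matrix.mul_smul, Matrix.mul_one]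
      rw [alg2, hBJl]
      module
    have hJE : Jl * E = 0 := by
      rw [hE]
      simp only [Matrix.mul_sub, Matrix.mul_add, Matrix.mul_smul, Matrix.mul_one,
        ← Matrix.mul_assoc]
      rw [hJB, Matrix.smul_mul, hJB, hJJl]
      have hc : (ω : ℝ) ^ 2 * (ω : ℝ) ^ 2 - c1 * (ω : ℝ) ^ 2 + c0 - μ * n = 0 := by
        simp only [hc1, hc0]
        linear_combination hkey - ((ω : ℝ) ^ 2 - ω + k - l + μ) * hkR
      match_scalars
      linear_combination hc
    have hEE : E * E = c0 • E := by
      nth_rewrite 1 [hE]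
      simp only [Matrix.sub_mul, Matrix.add_mul, Matrix.smul_mul, Matrix.one_mul,
        Matrix.mul_assoc, hBE, hJE, Matrix.mul_zero, smul_zero, sub_zero, zero_sub, add_zero,
        zero_add, neg_zero]
    have htrJl : Jl.trace = (n : ℝ) := by
      simp [Matrix.trace, Matrix.diag, hJl, Finset.card_univ, hcard]
    have htrJv : Jv.trace = (n : ℝ) := by
      simp [Matrix.trace, Matrix.diag, hJv, Finset.card_univ, hsrg.card]
    have htrB : B.trace = (ω : ℝ) * n := by
      rw [hB, Matrix.trace_mul_comm, hNNt, hA]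
      simp [Matrix.trace_add, Matrix.trace_smul, Matrix.trace_one, hsrg.card, mul_comm]
    have htrBB : (B * B).trace = c1 * ((ω : ℝ) * n) - c0 * n + μ * n := by
      have e : B * B = Nᵀ * (N * (Nᵀ * N)) := by rw [hB, Matrix.mul_assoc]
      have e2 : (N * (Nᵀ * N)) * Nᵀ = (N * Nᵀ) * (N * Nᵀ) := by
        simp only [Matrix.mul_assoc]
      rw [e, Matrix.trace_mul_comm, e2, alg1, hNNt, hA]
      simp only [Matrix.trace_add, Matrix.trace_sub, Matrix.trace_smul, Matrix.trace_one,
        trace_adjMatrix, htrJv, hsrg.card, smul_eq_mul]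
      ring
    have htrE : E.trace = 0 := by
      rw [hE]
      simp only [Matrix.trace_sub, Matrix.trace_add, Matrix.trace_smul, htrBB, htrB, htrJl,
        Matrix.trace_one, hcard, smul_eq_mul]
      ring
    have htrEE : (E * E).trace = 0 := by
      rw [hEE, Matrix.trace_smul, htrE, smul_zero]
    have hEsym : Eᵀ = E := by
      rw [hE]
      simp only [Matrix.transpose_sub, Matrix.transpose_add, Matrix.transpose_smul,
        Matrix.transpose_mul, Matrix.transpose_one, hJlsym]
      rw [hB, Matrix.transpose_mul, Matrix.transpose_transpose]
    have hEsymm : ∀ a b, E a b = E b a := by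
      intro a b
      nth_rewrite 1 [← hEsym]
      rw [Matrix.transpose_apply]
    have hE0 : E = 0 := by
      have hsq : ∑ p : ({s : Finset V // G.IsNClique ω s} × {s : Finset V // G.IsNClique ω s}),
          (E p.1 p.2) ^ 2 = 0 := by
        have ht : (E * E).trace = ∑ p : ({s : Finset V // G.IsNClique ω s}
            × {s : Finset V // G.IsNClique ω s}), (E p.1 p.2) ^ 2 := by
          rw [Fintype.sum_prod_type]
          rw [Matrix.trace]
          simp only [Matrix.diag, Matrix.mul_apply]
          refine Finset.sum_congr rfl fun a _ => Finset.sum_congr rfl fun b _ => ?_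
          rw [sq, hEsymm b a]
        rw [← ht, htrEE]
      ext a b
      have hz := (Finset.sum_eq_zero_iff_of_nonneg fun p _ => sq_nonneg (E p.1 p.2)).1 hsq
        (a, b) (Finset.mem_univ _)
      simpa using sq_eq_zero_iff.1 hz
    have hB2 : B * B = c1 • B - c0 • 1 + (μ : ℝ) • Jl := by
      have h := hE0
      rw [hE] at h
      linear_combination (norm := module) h
    have hAcB : Ac = B - (ω : ℝ) • 1 := by
      linear_combination (norm := module) -hNtN
    have hAc2 : Ac * Ac = (k : ℝ) • (1 : Matrix {s : Finset V // G.IsNClique ω s}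
        {s : Finset V // G.IsNClique ω s} ℝ) + (l : ℝ) • Ac + (μ : ℝ) • (Jl - 1 - Ac) := by
      rw [hAcB]
      simp only [Matrix.sub_mul, Matrix.mul_sub, Matrix.smul_mul, Matrix.mul_smul,
        Matrix.one_mul, Matrix.mul_one, smul_smul]
      rw [hB2]
      match_scalars <;> simp only [hc1, hc0] <;> ring
    have hw : ∀ s t : {s : Finset V // G.IsNClique ω s}, (Ac * Ac) s t
        = (Fintype.card ((cliqueGraph G ω).commonNeighbors s t) : ℝ) := by
      intro s t
      rw [hAc, ← sq, adjMatrix_pow_apply_eq_card_walk]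
      exact_mod_cast Fintype.card_congr
        ((cliqueGraph G ω).walkLengthTwoEquivCommonNeighbors s t)
    have hAc2' := fun (s t : {s : Finset V // G.IsNClique ω s}) =>
      congrFun (congrFun hAc2 s) t
    refine ⟨hcard, fun s => ?_, fun s t hadj => ?_, fun s t hne hnadj => ?_⟩
    · have h := hAc2' s s
      rw [hAc, adjMatrix_mul_self_apply_self] at h
      simp only [Matrix.add_apply, Matrix.smul_apply, Matrix.sub_apply, Matrix.one_apply_eq,
        hAc, adjMatrix_apply, SimpleGraph.irrefl, if_false, hJl, Matrix.of_apply,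
        smul_eq_mul] at h
      have : ((cliqueGraph G ω).degree s : ℝ) = (k : ℝ) := by rw [h]; ring
      exact_mod_cast this
    · have h := hAc2' s t
      rw [hw s t] at h
      have hne : s ≠ t := hadj.ne
      simp only [Matrix.add_apply, Matrix.smul_apply, Matrix.sub_apply,
        Matrix.one_apply_ne hne, hAc, adjMatrix_apply, if_pos hadj, hJl, Matrix.of_apply,
        smul_eq_mul] at h
      have : (Fintype.card ((cliqueGraph G ω).commonNeighbors s t) : ℝ) = (l : ℝ) := by
        rw [h]; ring
      exact_mod_cast this
    · have h := hAc2' s t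
      rw [hw s t] at h
      simp only [Matrix.add_apply, Matrix.smul_apply, Matrix.sub_apply,
        Matrix.one_apply_ne hne, hAc, adjMatrix_apply, if_neg hnadj, hJl, Matrix.of_apply,
        smul_eq_mul] at h
      have : (Fintype.card ((cliqueGraph G ω).commonNeighbors s t) : ℝ) = (μ : ℝ) := by
        rw [h]; ring
      exact_mod_cast this
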